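/- Let K and L be regular languages with state complexities m and n. Then the state complexity of K \ Lᴿ (the difference of K with the reversal of L) is at most m·2ⁿ − (m − 1). -/
import Mathlib


namespace SCPaper

/-- Reversal of a language. -/
def rev {α : Type} (L : Language α) : Language α := {w | w.reverse ∈ L}

/-- Union of two languages. -/
def lunion {α : Type} (K L : Language α) : Language α := {w | w ∈ K ∨ w ∈ L}

/-- Intersection of two languages. -/
def linter {α : Type} (K L : Language α) : Language α := {w | w ∈ K ∧ w ∈ L}

/-- Difference of two languages. -/
def ldiff {α : Type} (K L : Language α) : Language α := {w | w ∈ K ∧ w ∉ L}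

/-- Symmetric difference of two languages. -/
def lsymm {α : Type} (K L : Language α) : Language α := lunion (ldiff K L) (ldiff L K)

/-- Sizes (numbers of states) of complete DFAs recognizing `L`. -/
def complexitySet {α : Type} (L : Language α) : Set ℕ :=
  {n | ∃ M : DFA α (Fin n), M.accepts = L}

/-- A language is regular if it is recognized by some finite DFA. -/
def Regular {α : Type} (L : Language α) : Prop := (complexitySet L).Nonempty

/-- State complexity: the number of states of a minimal DFA for `L`. -/
noncomputable def sc {α : Type} (L : Language α) : ℕ := sInf (complexitySet L)

/-- The cyclic permutation (0,1,…,n−1). -/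
def cyc (n : ℕ) (i : Fin n) : Fin n :=
  ⟨(i.val + 1) % n, Nat.mod_lt _ (Nat.lt_of_le_of_lt (Nat.zero_le _) i.isLt)⟩

/-- The transposition (0,1). -/
def tp01 (n : ℕ) (i : Fin n) : Fin n :=
  if i.val = 0 then ⟨1 % n, Nat.mod_lt _ (Nat.lt_of_le_of_lt (Nat.zero_le _) i.isLt)⟩
  else if i.val = 1 then ⟨0, Nat.lt_of_le_of_lt (Nat.zero_le _) i.isLt⟩
  else i

/-- The singular map sending n−1 to 0 and fixing everything else. -/
def sing (n : ℕ) (i : Fin n) : Fin n :=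
  if i.val = n - 1 then ⟨0, Nat.lt_of_le_of_lt (Nat.zero_le _) i.isLt⟩ else i

/-- The transposition (n−2, n−1). -/
def tpTop (n : ℕ) (i : Fin n) : Fin n :=
  if i.val = n - 1 then ⟨n - 2, by have := i.isLt; omega⟩
  else if i.val = n - 2 then ⟨n - 1, by have := i.isLt; omega⟩
  else i

/-- The singular map sending n−1 to n−2 and fixing everything else. -/
def singTop (n : ℕ) (i : Fin n) : Fin n :=
  if i.val = n - 1 then ⟨n - 2, by have := i.isLt; omega⟩ else i

/-- 𝒰ₙ(a,b,∅): binary alphabet, a = cycle (0,…,n−1), b = transposition (0,1),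
initial state 0, final state n−1. -/
def U2dfa (n : ℕ) (h : 0 < n) : DFA (Fin 2) (Fin n) where
  step := fun i x => if x = 0 then cyc n i else tp01 n i
  start := ⟨0, h⟩
  accept := {i | i.val = n - 1}

def U2 (n : ℕ) (h : 0 < n) : Language (Fin 2) := (U2dfa n h).accepts

/-- 𝒰ₙ(a,b,c): a = cycle, b = transposition (0,1), c = (n−1 ↦ 0). -/
def Udfa (n : ℕ) (h : 0 < n) : DFA (Fin 3) (Fin n) where
  step := fun i x => if x = 0 then cyc n i else if x = 1 then tp01 n i else sing n i
  start := ⟨0, h⟩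
  accept := {i | i.val = n - 1}

def U (n : ℕ) (h : 0 < n) : Language (Fin 3) := (Udfa n h).accepts

/-- 𝒰ₙ(a,b,c) with final state set {0}. -/
def U0dfa (n : ℕ) (h : 0 < n) : DFA (Fin 3) (Fin n) where
  step := fun i x => if x = 0 then cyc n i else if x = 1 then tp01 n i else sing n i
  start := ⟨0, h⟩
  accept := {i | i.val = 0}

def U0 (n : ℕ) (h : 0 < n) : Language (Fin 3) := (U0dfa n h).accepts

/-- 𝒰ₙ(a,b,c,d): a = cycle, b = transposition (0,1), c = (n−1 ↦ 0), d = identity. -/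
def U4dfa (n : ℕ) (h : 0 < n) : DFA (Fin 4) (Fin n) where
  step := fun i x =>
    if x = 0 then cyc n i else if x = 1 then tp01 n i else if x = 2 then sing n i else i
  start := ⟨0, h⟩
  accept := {i | i.val = n - 1}

def U4 (n : ℕ) (h : 0 < n) : Language (Fin 4) := (U4dfa n h).accepts

/-- 𝒰ₙ(d,c,b,a): d = cycle, c = transposition (0,1), b = (n−1 ↦ 0), a = identity. -/
def U4dcbaDfa (n : ℕ) (h : 0 < n) : DFA (Fin 4) (Fin n) where
  step := fun i x =>
    if x = 3 then cyc n i else if x = 2 then tp01 n i else if x = 1 then sing n i else i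
  start := ⟨0, h⟩
  accept := {i | i.val = n - 1}

def U4dcba (n : ℕ) (h : 0 < n) : Language (Fin 4) := (U4dcbaDfa n h).accepts

/-- 𝒱ₙ(a,b,c,d): a = cycle, b = transposition (n−2,n−1), c = (n−1 ↦ n−2), d = identity. -/
def Vdfa (n : ℕ) (h : 0 < n) : DFA (Fin 4) (Fin n) where
  step := fun i x =>
    if x = 0 then cyc n i else if x = 1 then tpTop n i else if x = 2 then singTop n i else i
  start := ⟨0, h⟩
  accept := {i | i.val = n - 1}

def V (n : ℕ) (h : 0 < n) : Language (Fin 4) := (Vdfa n h).accepts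

/-- 𝒱ₙ(d,c,b,a): d = cycle, c = transposition (n−2,n−1), b = (n−1 ↦ n−2), a = identity. -/
def VdcbaDfa (n : ℕ) (h : 0 < n) : DFA (Fin 4) (Fin n) where
  step := fun i x =>
    if x = 3 then cyc n i else if x = 2 then tpTop n i else if x = 1 then singTop n i else i
  start := ⟨0, h⟩
  accept := {i | i.val = n - 1}

def Vdcba (n : ℕ) (h : 0 < n) : Language (Fin 4) := (VdcbaDfa n h).accepts

/-- Direct product of two DFAs with a chosen set of final states. -/
def prodDFA {α σ₁ σ₂ : Type} (M : DFA α σ₁) (N : DFA α σ₂) (acc : Set (σ₁ × σ₂)) :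
    DFA α (σ₁ × σ₂) where
  step := fun p x => (M.step p.1 x, N.step p.2 x)
  start := (M.start, N.start)
  accept := acc


/-- Chinese-remainder style pairing k ↦ (k mod m, k mod n). -/
def toPair (m n : ℕ) (hm : 0 < m) (hn : 0 < n) (k : Fin (m * n)) : Fin m × Fin n :=
  (⟨k.val % m, Nat.mod_lt _ hm⟩, ⟨k.val % n, Nat.mod_lt _ hn⟩)

/-- Componentwise successor on the product of two cyclic automata. -/
def prodSucc (m n : ℕ) (p : Fin m × Fin n) : Fin m × Fin n := (cyc m p.1, cyc n p.2)

/-- One-letter subset transition of the reversed NFA of 𝒰ₙ(a,b,c). -/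
def rstep (n : ℕ) (h : 0 < n) (S : Set (Fin n)) (x : Fin 3) : Set (Fin n) :=
  {q | (Udfa n h).step q x ∈ S}

/-- Action of a word on subsets in the reversed NFA of 𝒰ₙ(a,b,c). -/
def rword (n : ℕ) (h : 0 < n) (S : Set (Fin n)) (w : List (Fin 3)) : Set (Fin n) :=
  w.foldl (rstep n h) S

end SCPaper

open SCPaper

open SCPaper


namespace SCAux

/-- Accept languages agree along a DFA homomorphism. -/
theorem accepts_of_hom {α σ τ : Type} (M : DFA α σ) (N : DFA α τ) (f : σ → τ)
    (h1 : ∀ s x, f (M.step s x) = N.step (f s) x) (h2 : f M.start = N.start)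
    (h3 : ∀ s, s ∈ M.accept ↔ f s ∈ N.accept) : M.accepts = N.accepts := by
  have key : ∀ (w : List α) (s : σ), f (M.evalFrom s w) = N.evalFrom (f s) w := by
    intro w
    induction w with
    | nil => intro s; rfl
    | cons a w ih =>
      intro s
      show f (List.foldl M.step (M.step s a) w) = List.foldl N.step (N.step (f s) a) w
      rw [← h1 s a]; exact ih _
  ext w
  rw [DFA.mem_accepts, DFA.mem_accepts, h3, DFA.eval, DFA.eval, key, h2]

open scoped Classical in
/-- Subset construction on the reversed NFA of `N`. -/
noncomputable def revDFA {α σ : Type} (N : DFA α σ) : DFA α (σ → Bool) where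
  step := fun S x q => S (N.step q x)
  start := fun q => decide (q ∈ N.accept)
  accept := {S | S N.start = true}

theorem revDFA_evalFrom {α σ : Type} (N : DFA α σ) (w : List α) (S : σ → Bool) :
    (revDFA N).evalFrom S w = fun q => S (N.evalFrom q w.reverse) := by
  induction w using List.reverseRecOn with
  | nil => rfl
  | append_singleton w a ih =>
    rw [DFA.evalFrom_append_singleton, ih, List.reverse_append]
    rfl

theorem revDFA_accepts {α σ : Type} (N : DFA α σ) :
    (revDFA N).accepts = {w | w.reverse ∈ N.accepts} := by
  ext w
  rw [DFA.mem_accepts]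
  show (revDFA N).evalFrom (revDFA N).start w ∈ (revDFA N).accept ↔ _
  rw [revDFA_evalFrom]
  simp only [revDFA, Set.mem_setOf_eq, decide_eq_true_iff]
  rfl

theorem prod_evalFrom {α σ₁ σ₂ : Type} (M : DFA α σ₁) (N : DFA α σ₂)
    (acc : Set (σ₁ × σ₂)) (w : List α) (s : σ₁) (t : σ₂) :
    (SCPaper.prodDFA M N acc).evalFrom (s, t) w = (M.evalFrom s w, N.evalFrom t w) := by
  induction w generalizing s t with
  | nil => rfl
  | cons a w ih =>
    show (SCPaper.prodDFA M N acc).evalFrom (M.step s a, N.step t a) w = _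
    rw [ih]
    rfl

/-- Collapse all states of `P` whose second component is the sink `t` into one state. -/
def collapse {α σ₁ σ₂ : Type} [DecidableEq σ₂] (P : DFA α (σ₁ × σ₂)) (t : σ₂) :
    DFA α (Option (σ₁ × {s : σ₂ // s ≠ t})) where
  step := fun o x =>
    match o with
    | none => none
    | some q =>
        let p := P.step (q.1, q.2.val) x
        if h' : p.2 = t then none else some (p.1, ⟨p.2, h'⟩)
  start := if h : P.start.2 = t then none else some (P.start.1, ⟨P.start.2, h⟩)
  accept := {o | ∃ p : σ₁ × σ₂, ∃ h : p.2 ≠ t, o = some (p.1, ⟨p.2, h⟩) ∧ p ∈ P.accept}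

theorem collapse_accepts {α σ₁ σ₂ : Type} [DecidableEq σ₂] (P : DFA α (σ₁ × σ₂)) (t : σ₂)
    (hclosed : ∀ p x, p.2 = t → (P.step p x).2 = t)
    (hnonacc : ∀ p : σ₁ × σ₂, p.2 = t → p ∉ P.accept) :
    (collapse P t).accepts = P.accepts := by
  symm
  refine accepts_of_hom P (collapse P t)
    (fun p => if h : p.2 = t then none else some (p.1, ⟨p.2, h⟩)) ?_ ?_ ?_
  · intro s x
    beta_reduce
    by_cases h : s.2 = t
    · rw [dif_pos h, dif_pos (hclosed s x h)]
      rfl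
    · rw [dif_neg h]
      rfl
  · rfl
  · intro s
    beta_reduce
    constructor
    · intro hs
      have h : s.2 ≠ t := fun h => hnonacc s h hs
      rw [dif_neg h]
      exact ⟨s, h, rfl, hs⟩
    · intro hs
      by_cases h : s.2 = t
      · rw [dif_pos h] at hs
        obtain ⟨p, hp, habs, _⟩ := hs
        exact absurd habs (by simp)
      · rw [dif_neg h] at hs
        obtain ⟨p, hp, heq, hacc⟩ := hs
        have heq2 : (s.1, (⟨s.2, h⟩ : {s : σ₂ // s ≠ t})) = (p.1, ⟨p.2, hp⟩) := by
          injection heq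
        rw [Prod.mk.injEq] at heq2
        have e2 : s.2 = p.2 := congrArg Subtype.val heq2.2
        rw [Prod.ext heq2.1 e2]; exact hacc

/-- Transport a DFA along an equivalence of state types. -/
def reindex {α σ τ : Type} (M : DFA α σ) (e : σ ≃ τ) : DFA α τ where
  step := fun s x => e (M.step (e.symm s) x)
  start := e M.start
  accept := e '' M.accept

theorem reindex_accepts {α σ τ : Type} (M : DFA α σ) (e : σ ≃ τ) :
    (reindex M e).accepts = M.accepts := by
  symm
  refine accepts_of_hom M (reindex M e) e ?_ rfl ?_
  · intro s x; show e (M.step s x) = e (M.step (e.symm (e s)) x); rw [e.symm_apply_apply]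
  · intro s
    constructor
    · intro h; exact ⟨s, h, rfl⟩
    · rintro ⟨s', h, he⟩; rwa [e.injective he] at h

end SCAux

theorem diff_reversed_right_upper_bound {α : Type} (K L : Language α) (m n : ℕ)
    (hK : Regular K) (hL : Regular L) (hm : sc K = m) (hn : sc L = n) :
    sc (ldiff K (rev L)) ≤ m * 2 ^ n - (m - 1) := by
  classical
  obtain ⟨M, hM⟩ : ∃ M : DFA α (Fin m), M.accepts = K := by
    have h : sc K ∈ complexitySet K := Nat.sInf_mem hK
    rw [hm] at h; exact h
  obtain ⟨N, hN⟩ : ∃ N : DFA α (Fin n), N.accepts = L := by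
    have h : sc L ∈ complexitySet L := Nat.sInf_mem hL
    rw [hn] at h; exact h
  have hm0 : 0 < m := Fin.pos M.start
  set R := SCAux.revDFA N with hR
  have hRacc : R.accepts = rev L := by
    rw [hR, SCAux.revDFA_accepts, hN]; rfl
  set P := prodDFA M R {p | p.1 ∈ M.accept ∧ p.2 ∉ R.accept} with hP
  have hPacc : P.accepts = ldiff K (rev L) := by
    ext w
    rw [DFA.mem_accepts]
    show P.evalFrom (M.start, R.start) w ∈ P.accept ↔ _
    rw [hP, SCAux.prod_evalFrom]
    show (M.eval w ∈ M.accept ∧ ¬ R.eval w ∈ R.accept) ↔ (w ∈ K ∧ w ∉ rev L)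
    rw [← DFA.mem_accepts, ← DFA.mem_accepts, hM, hRacc]
  set t : Fin n → Bool := fun _ => true with ht
  have hclosed : ∀ p x, p.2 = t → (P.step p x).2 = t := by
    intro p x hp
    show (fun q => p.2 (N.step q x)) = t
    funext q
    rw [hp]
  have hnonacc : ∀ p : Fin m × (Fin n → Bool), p.2 = t → p ∉ P.accept := by
    rintro p hp ⟨_, h2⟩
    apply h2
    show p.2 N.start = true
    rw [hp]
  have hQacc : (SCAux.collapse P t).accepts = ldiff K (rev L) := by
    rw [SCAux.collapse_accepts P t hclosed hnonacc, hPacc]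
  have hsub : Fintype.card {s : Fin n → Bool // s ≠ t} = 2 ^ n - 1 := by
    have h2 := Fintype.card_subtype_compl (fun s : Fin n → Bool => s = t)
    rw [Fintype.card_subtype_eq, Fintype.card_fun, Fintype.card_bool, Fintype.card_fin] at h2
    exact h2
  have hcard : Fintype.card (Option (Fin m × {s : Fin n → Bool // s ≠ t}))
      = m * (2 ^ n - 1) + 1 := by
    rw [Fintype.card_option, Fintype.card_prod, Fintype.card_fin, hsub]
  have e := Fintype.equivFinOfCardEq hcard
  have hmem : m * (2 ^ n - 1) + 1 ∈ complexitySet (ldiff K (rev L)) := by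
    refine ⟨SCAux.reindex (SCAux.collapse P t) e, ?_⟩
    rw [SCAux.reindex_accepts, hQacc]
  have hle : sc (ldiff K (rev L)) ≤ m * (2 ^ n - 1) + 1 := Nat.sInf_le hmem
  have h2n : 1 ≤ 2 ^ n := Nat.one_le_two_pow
  have hms : m * (2 ^ n - 1) + m = m * 2 ^ n := by
    have : m * (2 ^ n - 1) + m * 1 = m * (2 ^ n - 1 + 1) := (Nat.mul_add m _ _).symm
    rw [mul_one] at this
    rw [this, Nat.sub_add_cancel h2n]
  omega
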